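/- Let F(q) = α K log(1 + q) for q ∈ [0,1] and C(q,g) = gθq, with α, K, θ > 0. The CP's single-content utility u(g) = F(q*(g)) − C(q*(g), g) evaluated at the ED best response q*(g) = min(1, gθ/(2cν)) is continuous in g on [0,∞), and for g ≥ 2cν/θ equals α K log 2 − gθ, hence is strictly decreasing there. -/
import Mathlib


/-- The CP's single-content utility u(g) = αK log(1 + q*(g)) − gθ q*(g), with
q*(g) = min(1, gθ/(2cν)), is continuous on [0,∞); for g ≥ 2cν/θ it equals
αK log 2 − gθ and is strictly decreasing there. -/
theorem stmt_19 (α K θ c ν : ℝ) (hα : 0 < α) (hK : 0 < K) (hθ : 0 < θ)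
    (hc : 0 < c) (hν : 0 < ν)
    (u : ℝ → ℝ)
    (hu : ∀ g, u g = α * K * Real.log (1 + min 1 (g * θ / (2 * c * ν))) -
      g * θ * min 1 (g * θ / (2 * c * ν))) :
    ContinuousOn u (Set.Ici (0:ℝ)) ∧
    (∀ g : ℝ, 2 * c * ν / θ ≤ g → u g = α * K * Real.log 2 - g * θ) ∧
    StrictAntiOn u (Set.Ici (2 * c * ν / θ)) := by
  have h2cν : (0:ℝ) < 2 * c * ν := by positivity
  have hueq : u = fun g => α * K * Real.log (1 + min 1 (g * θ / (2 * c * ν))) -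
      g * θ * min 1 (g * θ / (2 * c * ν)) := funext hu
  have hmin : ∀ g : ℝ, 2 * c * ν / θ ≤ g → min 1 (g * θ / (2 * c * ν)) = 1 := by
    intro g hg
    apply min_eq_left
    rw [le_div_iff₀ h2cν, one_mul]
    rw [div_le_iff₀ hθ] at hg
    linarith
  have hform : ∀ g : ℝ, 2 * c * ν / θ ≤ g → u g = α * K * Real.log 2 - g * θ := by
    intro g hg
    rw [hu, hmin g hg]
    norm_num
  refine ⟨?_, hform, ?_⟩
  · rw [hueq]
    apply ContinuousOn.sub
    · apply ContinuousOn.mul continuousOn_const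
      apply ContinuousOn.log
      · fun_prop
      · intro g hg
        have h0 : (0:ℝ) ≤ min 1 (g * θ / (2 * c * ν)) :=
          le_min (by norm_num) (div_nonneg (mul_nonneg hg hθ.le) h2cν.le)
        intro h; linarith [h0, h.ge]
    · fun_prop
  · intro a ha b hb hab
    rw [hform a ha, hform b hb]
    have := mul_lt_mul_of_pos_right hab hθ
    linarith
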